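/- (Pfaff–Saalschütz theorem, terminating form.) Let n ∈ ℕ and A, B, C ∈ ℂ with C ∉ {0, −1, …, −(n−1)} and C−A−B ∉ {0, −1, …, −(n−1)}. Then Σ_{k=0}^{n} [(−n)_k (A)_k (B)_k] / [k! (C)_k (1+A+B−n−C)_k] = [(C−A)_n (C−B)_n] / [(C)_n (C−A−B)_n]. -/

import Mathlib

open Finset

/-- Pochhammer symbol `(a)_k = a (a+1) ⋯ (a+k-1)`. -/
noncomputable def poch (a : ℂ) (k : ℕ) : ℂ := ∏ i ∈ Finset.range k, (a + i)

/-- The Wilson polynomial `W_n(z; t1,t2,t3,t4)` in the variable `z` (with `x = -z²`). -/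
noncomputable def wilson (n : ℕ) (z t1 t2 t3 t4 : ℂ) : ℂ :=
  poch (t1 + t2) n * poch (t1 + t3) n * poch (t1 + t4) n *
    ∑ k ∈ Finset.range (n + 1),
      (poch (-(n : ℂ)) k * poch (t1 + t2 + t3 + t4 + (n : ℂ) - 1) k *
        poch (t1 + z) k * poch (t1 - z) k) /
      ((k.factorial : ℂ) * poch (t1 + t2) k * poch (t1 + t3) k * poch (t1 + t4) k)

lemma poch_succ (a : ℂ) (k : ℕ) : poch a (k+1) = poch a k * (a + k) := by
  simp [poch, Finset.prod_range_succ]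

lemma poch_add (a : ℂ) (m k : ℕ) : poch a (m + k) = poch a m * poch (a + m) k := by
  unfold poch
  rw [Finset.prod_range_add]
  congr 1
  refine Finset.prod_congr rfl fun i _ => ?_
  push_cast
  ring

lemma poch_ne_zero (a : ℂ) (k : ℕ) (h : ∀ i : ℕ, i < k → a + i ≠ 0) : poch a k ≠ 0 := by
  unfold poch
  exact Finset.prod_ne_zero_iff.2 fun i hi => h i (Finset.mem_range.1 hi)

/-- Chu–Vandermonde for rising factorials. -/
lemma poch_vandermonde (x y : ℂ) (n : ℕ) :
    poch (x + y) n
      = ∑ k ∈ Finset.range (n+1), (n.choose k : ℂ) * (poch x k * poch y (n - k)) := by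
  induction n with
  | zero => simp [poch]
  | succ n ih =>
    set g : ℕ → ℂ := fun k => poch x k * poch y (n + 1 - k) with hg
    rw [poch_succ, ih, Finset.sum_mul]
    have key : ∀ k ∈ Finset.range (n+1),
        (n.choose k : ℂ) * (poch x k * poch y (n - k)) * (x + y + n)
        = (n.choose k : ℂ) * g (k+1) + (n.choose k : ℂ) * g k := by
      intro k hk
      have hk' : k ≤ n := Nat.lt_succ_iff.1 (Finset.mem_range.1 hk)
      have h1 : n + 1 - (k+1) = n - k := by omega
      have h2 : n + 1 - k = (n - k) + 1 := by omega
      simp only [hg, h1, h2, poch_succ]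
      have hcast : ((n - k : ℕ) : ℂ) = (n : ℂ) - (k : ℂ) := by
        push_cast [Nat.cast_sub hk']; ring
      rw [hcast]; ring
    rw [Finset.sum_congr rfl key, Finset.sum_add_distrib]
    have hB : (∑ k ∈ Finset.range (n+1), (n.choose k : ℂ) * g k)
        = ∑ k ∈ Finset.range (n+2), (n.choose k : ℂ) * g k := by
      rw [Finset.sum_range_succ (fun k => (n.choose k : ℂ) * g k) (n+1)]
      simp [Nat.choose_eq_zero_of_lt (Nat.lt_succ_self n)]
    rw [hB]
    rw [Finset.sum_range_succ' (fun k => ((n+1).choose k : ℂ) * g k) (n+1),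
        Finset.sum_range_succ' (fun k => (n.choose k : ℂ) * g k) (n+1)]
    simp only [Nat.choose_succ_succ, Nat.cast_add, Nat.choose_zero_right, Nat.cast_one,
      Nat.succ_eq_add_one, add_mul, Finset.sum_add_distrib]
    ring

/-- Triangle reindexing. -/
lemma tri_sum (n : ℕ) (f : ℕ → ℕ → ℂ) :
    ∑ k ∈ Finset.range (n+1), ∑ j ∈ Finset.range (n+1-k), f k j
      = ∑ m ∈ Finset.range (n+1), ∑ k ∈ Finset.range (m+1), f k (m-k) := by
  rw [Finset.sum_sigma', Finset.sum_sigma']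
  refine Finset.sum_nbij' (fun p => ⟨p.1 + p.2, p.1⟩) (fun q => ⟨q.2, q.1 - q.2⟩) ?_ ?_ ?_ ?_ ?_
  · rintro ⟨k, j⟩ hp
    simp only [Finset.mem_sigma, Finset.mem_range] at *
    omega
  · rintro ⟨m, k⟩ hq
    simp only [Finset.mem_sigma, Finset.mem_range] at *
    omega
  · rintro ⟨k, j⟩ hp
    simp only [Finset.mem_sigma, Finset.mem_range] at hp
    simp only [Nat.add_sub_cancel_left]
  · rintro ⟨m, k⟩ hq
    simp only [Finset.mem_sigma, Finset.mem_range] at hq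
    have : k + (m - k) = m := by omega
    simp [this]
  · rintro ⟨k, j⟩ hp
    simp only [Nat.add_sub_cancel_left]

/-- The Pfaff–Saalschütz identity, denominator-free form. -/
lemma key_identity (n : ℕ) (A B C : ℂ) :
    ∑ k ∈ Finset.range (n+1), (n.choose k : ℂ) * poch A k * poch B k
        * poch (C + k) (n - k) * poch (C - A - B) (n - k)
      = poch (C - A) n * poch (C - B) n := by
  have step1 : ∀ k ∈ Finset.range (n+1),
      (n.choose k : ℂ) * poch A k * poch B k * poch (C + k) (n - k) * poch (C - A - B) (n - k)
      = ∑ j ∈ Finset.range (n+1-k),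
          ((n.choose k : ℂ) * ((n-k).choose j : ℂ)) * poch A (k + j) * poch B k
            * poch (C - A) (n - k - j) * poch (C - A - B) (n - k) := by
    intro k hk
    have hk' : k ≤ n := Nat.lt_succ_iff.1 (Finset.mem_range.1 hk)
    have hC : C + (k : ℂ) = (A + k) + (C - A) := by ring
    rw [hC, poch_vandermonde, show n - k + 1 = n + 1 - k by omega, Finset.mul_sum,
      Finset.sum_mul]
    refine Finset.sum_congr rfl fun j hj => ?_
    rw [poch_add A k j]
    ring
  rw [Finset.sum_congr rfl step1, tri_sum]
  have step2 : ∀ m ∈ Finset.range (n+1),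
      (∑ k ∈ Finset.range (m+1),
        ((n.choose k : ℂ) * ((n-k).choose (m-k) : ℂ)) * poch A (k + (m-k)) * poch B k
          * poch (C - A) (n - k - (m-k)) * poch (C - A - B) (n - k))
      = (n.choose m : ℂ) * poch A m * poch (C - A) n * poch (C - A - B) (n - m) := by
    intro m hm
    have hm' : m ≤ n := Nat.lt_succ_iff.1 (Finset.mem_range.1 hm)
    have inner : ∀ k ∈ Finset.range (m+1),
        ((n.choose k : ℂ) * ((n-k).choose (m-k) : ℂ)) * poch A (k + (m-k)) * poch B k
          * poch (C - A) (n - k - (m-k)) * poch (C - A - B) (n - k)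
        = ((n.choose m : ℂ) * poch A m * poch (C - A) (n - m) * poch (C - A - B) (n - m))
            * ((m.choose k : ℂ) * (poch B k * poch (C - A - B + ((n - m : ℕ) : ℂ)) (m - k))) := by
      intro k hkm
      have hkm' : k ≤ m := Nat.lt_succ_iff.1 (Finset.mem_range.1 hkm)
      have e1 : k + (m - k) = m := by omega
      have e2 : n - k - (m - k) = n - m := by omega
      have e3 : n - k = (n - m) + (m - k) := by omega
      have hch : (n.choose k : ℂ) * ((n-k).choose (m-k) : ℂ)
          = (n.choose m : ℂ) * (m.choose k : ℂ) := by
        rw [← Nat.cast_mul, ← Nat.cast_mul, Nat.choose_mul hkm']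
      rw [e1, e2, hch, e3, poch_add (C - A - B) (n - m) (m - k)]
      ring
    rw [Finset.sum_congr rfl inner, ← Finset.mul_sum]
    have hvdm : (∑ k ∈ Finset.range (m+1),
        (m.choose k : ℂ) * (poch B k * poch (C - A - B + ((n - m : ℕ) : ℂ)) (m - k)))
        = poch (C - A + ((n - m : ℕ) : ℂ)) m := by
      rw [← poch_vandermonde]
      congr 1
      ring
    rw [hvdm]
    have : poch (C - A) (n - m) * poch (C - A + ((n - m : ℕ) : ℂ)) m = poch (C - A) n := by
      rw [← poch_add, show n - m + m = n by omega]
    calc (n.choose m : ℂ) * poch A m * poch (C - A) (n - m) * poch (C - A - B) (n - m)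
          * poch (C - A + ((n - m : ℕ) : ℂ)) m
        = (n.choose m : ℂ) * poch A m
            * (poch (C - A) (n - m) * poch (C - A + ((n - m : ℕ) : ℂ)) m)
            * poch (C - A - B) (n - m) := by ring
      _ = (n.choose m : ℂ) * poch A m * poch (C - A) n * poch (C - A - B) (n - m) := by
          rw [this]
  rw [Finset.sum_congr rfl step2]
  have final : (∑ m ∈ Finset.range (n+1),
      (n.choose m : ℂ) * poch A m * poch (C - A) n * poch (C - A - B) (n - m))
      = poch (C - A) n * ∑ m ∈ Finset.range (n+1),
          (n.choose m : ℂ) * (poch A m * poch (C - A - B) (n - m)) := by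
    rw [Finset.mul_sum]
    exact Finset.sum_congr rfl fun m _ => by ring
  rw [final, ← poch_vandermonde]
  congr 1
  ring

theorem pfaff_saalschuetz (n : ℕ) (A B C : ℂ)
    (hC : ∀ k : ℕ, k < n → C + k ≠ 0)
    (hCAB : ∀ k : ℕ, k < n → C - A - B + k ≠ 0) :
    ∑ k ∈ Finset.range (n + 1),
        (poch (-(n : ℂ)) k * poch A k * poch B k) /
          ((k.factorial : ℂ) * poch C k * poch (1 + A + B - (n : ℂ) - C) k)
      = (poch (C - A) n * poch (C - B) n) / (poch C n * poch (C - A - B) n) := by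
  have hCn : poch C n ≠ 0 := poch_ne_zero _ _ fun i hi => hC i hi
  have hDn : poch (C - A - B) n ≠ 0 := poch_ne_zero _ _ fun i hi => hCAB i hi
  have term : ∀ k ∈ Finset.range (n+1),
      (poch (-(n : ℂ)) k * poch A k * poch B k) /
          ((k.factorial : ℂ) * poch C k * poch (1 + A + B - (n : ℂ) - C) k)
      = ((n.choose k : ℂ) * poch A k * poch B k
          * poch (C + k) (n - k) * poch (C - A - B) (n - k))
          / (poch C n * poch (C - A - B) n) := by
    intro k hk
    have hk' : k ≤ n := Nat.lt_succ_iff.1 (Finset.mem_range.1 hk)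
    -- F1 : poch (-(n:ℂ)) k = (-1)^k * k! * choose n k
    have F1 : poch (-(n : ℂ)) k = (-1)^k * (k.factorial : ℂ) * (n.choose k : ℂ) := by
      unfold poch
      have : ∀ i ∈ Finset.range k, -(n : ℂ) + i = (-1) * ((n - i : ℕ) : ℂ) := by
        intro i hi
        have hi' : i ≤ n := le_trans (le_of_lt (Finset.mem_range.1 hi)) hk'
        rw [Nat.cast_sub hi']
        ring
      rw [Finset.prod_congr rfl this, Finset.prod_mul_distrib, Finset.prod_const,
        Finset.card_range, ← Nat.cast_prod, ← Nat.descFactorial_eq_prod_range,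
        Nat.descFactorial_eq_factorial_mul_choose]
      push_cast
      ring
    -- F2 : reversal
    have F2 : poch (1 + A + B - (n : ℂ) - C) k
        = (-1)^k * poch (C - A - B + ((n - k : ℕ) : ℂ)) k := by
      unfold poch
      rw [← Finset.prod_range_reflect (fun j => C - A - B + ((n - k : ℕ) : ℂ) + j) k]
      rw [show ((-1 : ℂ))^k = ∏ _i ∈ Finset.range k, (-1 : ℂ) by
        rw [Finset.prod_const, Finset.card_range]]
      rw [← Finset.prod_mul_distrib]
      refine Finset.prod_congr rfl fun i hi => ?_
      have hik : i < k := Finset.mem_range.1 hi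
      have c1 : ((n - k : ℕ) : ℂ) = (n : ℂ) - (k : ℂ) := by
        rw [Nat.cast_sub hk']
      have c2 : ((k - 1 - i : ℕ) : ℂ) = (k : ℂ) - 1 - (i : ℂ) := by
        have : k - 1 - i = k - (1 + i) := by omega
        rw [this, Nat.cast_sub (by omega)]
        push_cast
        ring
      rw [c1, c2]
      ring
    have F3 : poch C n = poch C k * poch (C + k) (n - k) := by
      rw [← poch_add, show k + (n - k) = n by omega]
    have F4 : poch (C - A - B) n
        = poch (C - A - B) (n - k) * poch (C - A - B + ((n - k : ℕ) : ℂ)) k := by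
      rw [← poch_add, show (n - k) + k = n by omega]
    have hfac : (k.factorial : ℂ) ≠ 0 := Nat.cast_ne_zero.2 k.factorial_ne_zero
    have hpCk : poch C k ≠ 0 := poch_ne_zero _ _ fun i hi => hC i (lt_of_lt_of_le hi hk')
    have hX : poch (C + k) (n - k) ≠ 0 := by
      refine poch_ne_zero _ _ fun i hi => ?_
      have h2 : C + (k : ℂ) + (i : ℂ) = C + ((k + i : ℕ) : ℂ) := by push_cast; ring
      rw [h2]
      exact hC (k + i) (by omega)
    have hY : poch (C - A - B) (n - k) ≠ 0 := by
      refine poch_ne_zero _ _ fun i hi => hCAB i (by omega)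
    have hD : poch (C - A - B + ((n - k : ℕ) : ℂ)) k ≠ 0 := by
      refine poch_ne_zero _ _ fun i hi => ?_
      have h2 : C - A - B + ((n - k : ℕ) : ℂ) + (i : ℂ)
          = C - A - B + ((n - k + i : ℕ) : ℂ) := by push_cast; ring
      rw [h2]
      exact hCAB (n - k + i) (by omega)
    have hneg : ((-1 : ℂ))^k ≠ 0 := pow_ne_zero _ (by norm_num)
    rw [F1, F2, F3, F4]
    rw [div_eq_div_iff (by exact mul_ne_zero (mul_ne_zero hfac hpCk) (mul_ne_zero hneg hD))
      (by exact mul_ne_zero (mul_ne_zero hpCk hX) (mul_ne_zero hY hD))]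
    ring
  rw [Finset.sum_congr rfl term, ← Finset.sum_div]
  congr 1
  rw [← key_identity n A B C]
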